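/- The sequence of total sums of Lah numbers 𝓛_n = ∑_{k=1}^{n} L(n,k), for n ≥ 1, is absolutely convex: for all integers n ≥ 1 and k ≥ 0, the even-order finite difference Δ^{2k} 𝓛_n = ∑_{m=0}^{2k} (-1)^m C(2k, m) 𝓛_{n+2k-m} is nonnegative. -/

import Mathlib

open Finset

/-- Lah numbers: `L(n,k) = C(n-1,k-1) * n! / k!` (as a real number). -/
noncomputable def lah (n k : ℕ) : ℝ :=
  ((n - 1).choose (k - 1) : ℝ) * (Nat.factorial n) / (Nat.factorial k)

/-- The total sum of Lah numbers `𝓛_n = ∑_{k=1}^n L(n,k)`. -/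
noncomputable def lahTotal (n : ℕ) : ℝ := ∑ k ∈ Finset.Icc 1 n, lah n k

/-! ### Auxiliary development -/

/-- `Lh j m` is the Lah number `L(m, j)`, with the convention `L(m,0) = 0`. -/
noncomputable def Lh (j : ℕ) : ℕ → ℝ := fun m => if j = 0 then 0 else lah m j

lemma lah_nonneg (m j : ℕ) : 0 ≤ lah m j := by
  unfold lah; positivity

lemma Lh_nonneg (j m : ℕ) : 0 ≤ Lh j m := by
  unfold Lh; split <;> [rfl; exact lah_nonneg m j]

lemma lah_eq_zero_of_gt (N j : ℕ) (hN : 1 ≤ N) (hj : N < j) : lah N j = 0 := by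
  unfold lah
  rw [Nat.choose_eq_zero_of_lt (by omega)]
  simp

/-- The key choose identity. -/
lemma nat_id (p b : ℕ) :
    (p + 2) * (p + 1).choose (b + 1) = (p + b + 3) * p.choose (b + 1) + (b + 2) * p.choose b := by
  have h1 : (p + 1).choose (b + 1) = p.choose b + p.choose (b + 1) := Nat.choose_succ_succ p b
  have h2 : (p + 1) * p.choose b = (p + 1).choose (b + 1) * (b + 1) := Nat.add_one_mul_choose_eq p b
  zify at h1 h2 ⊢
  linear_combination (p + b + 3 : ℤ) * h1 + h2

/-- The Lah recurrence `L(m+1, j+1) = (m + j + 1) L(m, j+1) + L(m, j)`, for `m ≥ 1`. -/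
lemma Lh_rec (m j : ℕ) (hm : 1 ≤ m) :
    Lh (j + 1) (m + 1) = ((m : ℝ) + j + 1) * Lh (j + 1) m + Lh j m := by
  obtain ⟨p, rfl⟩ : ∃ p, m = p + 1 := ⟨m - 1, by omega⟩
  cases j with
  | zero =>
      simp only [Lh, if_neg (by omega : ¬ (0 + 1 = 0))]
      unfold lah
      simp [Nat.factorial_succ]
  | succ b =>
      simp only [Lh, if_neg (by omega : ¬ (b + 1 + 1 = 0)), if_neg (by omega : ¬ (b + 1 = 0))]
      unfold lah
      have key : ((p + 2) * (p + 1).choose (b + 1) : ℝ)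
          = ((p + b + 3) * p.choose (b + 1) + (b + 2) * p.choose b : ℝ) := by
        exact_mod_cast congrArg (Nat.cast : ℕ → ℝ) (nat_id p b)
      have hfb : (Nat.factorial (b + 2) : ℝ) = (b + 2) * Nat.factorial (b + 1) := by
        rw [Nat.factorial_succ]; push_cast; ring
      have hfp : (Nat.factorial (p + 2) : ℝ) = (p + 2) * Nat.factorial (p + 1) := by
        rw [Nat.factorial_succ]; push_cast; ring
      simp only [show (p + 1 + 1 : ℕ) - 1 = p + 1 from rfl, show (p + 1 : ℕ) - 1 = p from rfl,
        show (b + 1 + 1 : ℕ) - 1 = b + 1 from rfl, show (b + 1 : ℕ) - 1 = b from rfl,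
        hfb, hfp]
      have h1 : (Nat.factorial (b + 1) : ℝ) ≠ 0 := by positivity
      have h2 : (Nat.factorial (b + 2) : ℝ) ≠ 0 := by positivity
      field_simp
      push_cast
      linear_combination key

/-- Iterated forward differences only depend on values on a window. -/
lemma fd_congr : ∀ (k : ℕ) (g h : ℕ → ℝ) (n : ℕ),
    (∀ m, n ≤ m → m ≤ n + k → g m = h m) → (fwdDiff 1)^[k] g n = (fwdDiff 1)^[k] h n := by
  intro k
  induction k with
  | zero => intro g h n hgh; exact hgh n le_rfl (by omega)
  | succ k ih =>
      intro g h n hgh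
      rw [Function.iterate_succ_apply, Function.iterate_succ_apply]
      apply ih
      intro m hm hm'
      simp only [fwdDiff]
      rw [hgh m hm (by omega), hgh (m + 1) (by omega) (by omega)]

lemma fd_shift : ∀ (k : ℕ) (g : ℕ → ℝ) (n : ℕ),
    (fwdDiff 1)^[k] (fun m => g (m + 1)) n = (fwdDiff 1)^[k] g (n + 1) := by
  intro k
  induction k with
  | zero => intro g n; rfl
  | succ k ih =>
      intro g n
      rw [Function.iterate_succ_apply, Function.iterate_succ_apply]
      have : fwdDiff 1 (fun m => g (m + 1)) = fun m => (fwdDiff 1 g) (m + 1) := by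
        funext m; simp [fwdDiff]
      rw [this, ih]

lemma fd_zero_fun : ∀ (k : ℕ) (n : ℕ), (fwdDiff 1)^[k] (fun _ => (0 : ℝ)) n = 0 := by
  intro k n
  rw [fwdDiff_iter_eq_sum_shift]
  simp

lemma fd_add_apply (g h : ℕ → ℝ) (k n : ℕ) :
    (fwdDiff 1)^[k] (fun m => g m + h m) n = (fwdDiff 1)^[k] g n + (fwdDiff 1)^[k] h n := by
  have := fwdDiff_iter_add (1 : ℕ) g h k
  have h2 : (fun m => g m + h m) = g + h := rfl
  rw [h2, this]; rfl

/-- Leibniz-type rule for a linear factor. -/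
lemma fd_linmul (c : ℝ) : ∀ (k : ℕ) (g : ℕ → ℝ) (n : ℕ),
    (fwdDiff 1)^[k + 1] (fun m : ℕ => ((m : ℝ) + c) * g m) n
      = ((n : ℝ) + c) * (fwdDiff 1)^[k + 1] g n + (k + 1) * (fwdDiff 1)^[k] g (n + 1) := by
  intro k
  induction k with
  | zero =>
      intro g n
      simp only [zero_add, Function.iterate_one, Function.iterate_zero, id_eq, fwdDiff]
      push_cast
      ring
  | succ k ih =>
      intro g n
      rw [Function.iterate_succ_apply]
      have hsplit : fwdDiff 1 (fun m : ℕ => ((m : ℝ) + c) * g m)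
          = fun m : ℕ => ((m : ℝ) + c) * (fwdDiff 1 g) m + g (m + 1) := by
        funext m; simp only [fwdDiff]; push_cast; ring
      rw [hsplit, fd_add_apply, ih (fwdDiff 1 g) n, fd_shift]
      rw [← Function.iterate_succ_apply (fwdDiff 1) (k + 1) g,
        ← Function.iterate_succ_apply (fwdDiff 1) k g]
      push_cast
      ring

/-- All iterated forward differences of Lah columns are nonnegative. -/
lemma fd_Lh_nonneg : ∀ (k : ℕ), ∀ (j n : ℕ), 1 ≤ n → 0 ≤ (fwdDiff 1)^[k] (Lh j) n := by
  intro k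
  induction k using Nat.strong_induction_on with
  | _ k ih =>
    match k with
    | 0 => intro j n hn; exact Lh_nonneg j n
    | (k + 1) =>
      intro j n hn
      cases j with
      | zero =>
          have : Lh 0 = fun _ => (0 : ℝ) := by funext m; simp [Lh]
          rw [this, fd_zero_fun]
      | succ j =>
          rw [Function.iterate_succ_apply]
          have hcongr : (fwdDiff 1)^[k] (fwdDiff 1 (Lh (j + 1))) n
              = (fwdDiff 1)^[k] (fun m : ℕ => ((m : ℝ) + j) * Lh (j + 1) m + Lh j m) n := by
            apply fd_congr
            intro m hm hm'
            simp only [fwdDiff]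
            rw [Lh_rec m j (by omega)]
            ring
          rw [hcongr, fd_add_apply]
          have h2 : 0 ≤ (fwdDiff 1)^[k] (Lh j) n := ih k (by omega) j n hn
          have h1 : 0 ≤ (fwdDiff 1)^[k] (fun m : ℕ => ((m : ℝ) + j) * Lh (j + 1) m) n := by
            match k with
            | 0 =>
                simp only [Function.iterate_zero, id_eq]
                have := Lh_nonneg (j + 1) n
                positivity
            | (k + 1) =>
                rw [fd_linmul]
                have a1 : 0 ≤ (fwdDiff 1)^[k + 1] (Lh (j + 1)) n := ih (k + 1) (by omega) _ n hn
                have a2 : 0 ≤ (fwdDiff 1)^[k] (Lh (j + 1)) (n + 1) := ih k (by omega) _ (n + 1) (by omega)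
                have hc : (0 : ℝ) ≤ (n : ℝ) + j := by positivity
                positivity
          linarith

theorem lahTotal_absolutely_convex (n : ℕ) (hn : 1 ≤ n) (k : ℕ) :
    0 ≤ ∑ m ∈ Finset.range (2 * k + 1),
        (-1 : ℝ) ^ m * ((2 * k).choose m : ℝ) * lahTotal (n + 2 * k - m) := by
  set K := 2 * k with hK
  -- rewrite each lahTotal as a sum over a common index set
  have hstep1 : ∀ m ∈ Finset.range (K + 1),
      (-1 : ℝ) ^ m * ((K).choose m : ℝ) * lahTotal (n + K - m)
      = ∑ j ∈ Finset.Icc 1 (n + K), (-1 : ℝ) ^ m * ((K).choose m : ℝ) * Lh j (n + K - m) := by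
    intro m hm
    rw [Finset.mem_range] at hm
    rw [← Finset.mul_sum]
    congr 1
    unfold lahTotal
    rw [Finset.sum_subset (Finset.Icc_subset_Icc_right (show n + K - m ≤ n + K by omega))]
    · apply Finset.sum_congr rfl
      intro j hj
      rw [Finset.mem_Icc] at hj
      simp [Lh, show ¬ (j = 0) by omega]
    · intro j hj hj'
      rw [Finset.mem_Icc] at hj hj'
      exact lah_eq_zero_of_gt _ _ (by omega) (by omega)
  rw [Finset.sum_congr rfl hstep1, Finset.sum_comm]
  apply Finset.sum_nonneg
  intro j _
  have hfd : ∑ m ∈ Finset.range (K + 1),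
      (-1 : ℝ) ^ m * ((K).choose m : ℝ) * Lh j (n + K - m) = (fwdDiff 1)^[K] (Lh j) n := by
    rw [fwdDiff_iter_eq_sum_shift]
    rw [← Finset.sum_range_reflect]
    apply Finset.sum_congr rfl
    intro i hi
    rw [Finset.mem_range] at hi
    have h1 : K + 1 - 1 - i = K - i := by omega
    have h2 : n + K - (K - i) = n + i := by omega
    have h3 : K.choose (K - i) = K.choose i := Nat.choose_symm (by omega)
    rw [h1, h2, h3]
    have h4 : n + i • (1 : ℕ) = n + i := by simp
    rw [h4, zsmul_eq_mul]
    push_cast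
    have h5 : (-1 : ℝ) ^ (K - i) = (-1 : ℝ) ^ i := by
      have hmod : (K - i) % 2 = i % 2 := by omega
      rw [neg_one_pow_eq_pow_mod_two, hmod, ← neg_one_pow_eq_pow_mod_two]
    rw [h5]
  rw [hfd]
  exact fd_Lh_nonneg K j n hn
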